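/- The number e_n of weighted (n,n) Delannoy paths satisfies e_0 = 1, e_1 = 3, and the recurrence e_n = 3·e_{n−1} + 2(n−1)·e_{n−2} for all n ≥ 2. -/

import Mathlib

/-- Labeled steps are pairs `(L, l)` with `L : Fin 3` (`0` = north `N`, `1` = east `E`,
`2` = diagonal `D`) and `l : ℕ` the weight.  `wdIdx W` is the (increasing) list of
indices of the steps of the word `W` that are not the weight-one diagonal step `(D,1)`,
i.e. the index sequence `i_1 < … < i_t` of the paper (0-indexed). -/
def wdIdx (W : List (Fin 3 × ℕ)) : List ℕ :=
  (List.range W.length).filter (fun i => decide (W.getD i (0, 0) ≠ ((2 : Fin 3), 1)))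

/-- `mcount W i = m_i`: the number of steps strictly before position `i` whose weight
is different from `1`. -/
def mcount (W : List (Fin 3 × ℕ)) (i : ℕ) : ℕ :=
  ((List.range W.length).filter (fun k => decide (k < i ∧ (W.getD k (0, 0)).2 ≠ 1))).length

/-- `dcount W i = d_i`: the number of steps strictly after position `i` equal to `(D,1)`. -/
def dcount (W : List (Fin 3 × ℕ)) (i : ℕ) : ℕ :=
  ((List.range W.length).filter
    (fun k => decide (i < k ∧ W.getD k (0, 0) = ((2 : Fin 3), 1)))).length

/-- A *weighted `(n,n)` Delannoy path*: a word `W = W_1 … W_r` of labeled steps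
`W_i = (L_i, l_i)` such that (in the notation of the paper, with `i_1 < … < i_t` the
indices of the steps different from `(D,1)`):
* each weight is a positive integer and equals `1` on `N` and `E` steps;
* `L_1 … L_r` is a lattice path from `(0,0)` to `(n,n)` (i.e. `#N + #D = #E + #D = n`);
* `t` is even and every index `i` with `W_i = (D,1)` satisfies `i > i_{t/2}`;
* `L_{i_j} = N` iff `L_{i_{t+1−j}} = E` for `1 ≤ j ≤ t`;
* if `l_{i_j} ≠ 1` for some `1 ≤ j ≤ t/2`, then
  `W_{i_{t+1−j}} = (D, 2n+3−2(i_j + m_{i_j} + d_{i_{t+1−j}}) − l_{i_j})`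
  (positions `i_j` are 1-indexed in this formula, as in the paper; here indices are
  0-indexed, whence the `+ 1`). -/
def IsWeightedDelannoy (n : ℕ) (W : List (Fin 3 × ℕ)) : Prop :=
  (∀ w ∈ W, 1 ≤ w.2 ∧ (w.1 ≠ 2 → w.2 = 1)) ∧
  List.countP (fun w => decide (w.1 = 0 ∨ w.1 = 2)) W = n ∧
  List.countP (fun w => decide (w.1 = 1 ∨ w.1 = 2)) W = n ∧
  Even (wdIdx W).length ∧
  (∀ i < W.length, W.getD i (0, 0) = ((2 : Fin 3), 1) →
    ∀ _ : (wdIdx W).length / 2 - 1 < (wdIdx W).length,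
      (wdIdx W).getD ((wdIdx W).length / 2 - 1) 0 < i) ∧
  (∀ j < (wdIdx W).length,
    ((W.getD ((wdIdx W).getD j 0) (0, 0)).1 = 0 ↔
      (W.getD ((wdIdx W).getD ((wdIdx W).length - 1 - j) 0) (0, 0)).1 = 1)) ∧
  (∀ j < (wdIdx W).length / 2,
    (W.getD ((wdIdx W).getD j 0) (0, 0)).2 ≠ 1 →
      (W.getD ((wdIdx W).getD ((wdIdx W).length - 1 - j) 0) (0, 0)).1 = 2 ∧
      ((W.getD ((wdIdx W).getD ((wdIdx W).length - 1 - j) 0) (0, 0)).2 : ℤ) =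
        2 * (n : ℤ) + 3 -
          2 * (((wdIdx W).getD j 0 : ℤ) + 1 +
            (mcount W ((wdIdx W).getD j 0) : ℤ) +
            (dcount W ((wdIdx W).getD ((wdIdx W).length - 1 - j) 0) : ℤ)) -
          ((W.getD ((wdIdx W).getD j 0) (0, 0)).2 : ℤ))

/-- `e_n`, the number of weighted `(n,n)` Delannoy paths. -/
noncomputable def eDel (n : ℕ) : ℕ :=
  Nat.card {W : List (Fin 3 × ℕ) // IsWeightedDelannoy n W}


abbrev Step := Fin 3 × ℕ
def D1 : Step := ((2 : Fin 3), 1)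


lemma getD_append' (W : List Step) (y : Step) {i : ℕ} (h : i < W.length) :
    (W ++ [y]).getD i (0,0) = W.getD i (0,0) := by
  rw [List.getD_append _ _ _ _ h]

lemma getD_concat_len (W : List Step) (y : Step) :
    (W ++ [y]).getD W.length (0,0) = y := by
  rw [List.getD_eq_getElem?_getD, List.getElem?_concat_length]
  rfl

lemma wdIdx_append_single (W : List Step) (y : Step) :
    wdIdx (W ++ [y]) = wdIdx W ++ (if y = D1 then [] else [W.length]) := by
  unfold wdIdx
  rw [List.length_append, List.length_singleton, List.range_succ, List.filter_append]
  congr 1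
  · apply List.filter_congr
    intro i hi
    simp only [List.mem_range] at hi
    rw [getD_append' _ _ hi]
  · rw [List.filter_singleton]
    rw [getD_concat_len]
    by_cases h : y = D1
    · simp [h, D1]
    · simp [show ¬ y = ((2:Fin 3),1) from h, D1]


lemma filter_succ_range (p : ℕ → Bool) (n : ℕ) :
    (List.map Nat.succ (List.range n)).filter p =
      ((List.range n).filter (fun k => p (k + 1))).map (· + 1) := by
  rw [List.filter_map]
  rfl

lemma filter_single (p : ℕ → Bool) (a : ℕ) (h : p a = false) : [a].filter p = [] := by
  simp [List.filter_singleton, h]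

lemma filter_single' (p : ℕ → Bool) (a : ℕ) (h : p a = true) : [a].filter p = [a] := by
  simp [List.filter_singleton, h]

lemma wdIdx_cons (x : Step) (W : List Step) :
    wdIdx (x :: W) = (if x = D1 then [] else [0]) ++ (wdIdx W).map (· + 1) := by
  unfold wdIdx
  rw [List.length_cons, List.range_succ_eq_map, List.filter_cons, filter_succ_range]
  have h1 : ((List.range W.length).filter
      (fun k => decide ((x :: W).getD (k + 1) (0,0) ≠ ((2:Fin 3),1)))) =
      (List.range W.length).filter (fun i => decide (W.getD i (0,0) ≠ ((2:Fin 3),1))) := by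
    apply List.filter_congr
    intro k _
    simp [List.getD_cons_succ]
  rw [h1]
  simp only [List.getD_cons_zero]
  by_cases h : x = D1
  · have : decide (x ≠ ((2:Fin 3),1)) = false := by simp [h, D1]
    simp only [this]
    simp [h]
  · have : decide (x ≠ ((2:Fin 3),1)) = true := by
      simp only [decide_eq_true_eq]
      intro hc; exact h (by rw [hc]; rfl)
    simp only [this]
    simp [h]

lemma mcount_cons_succ (x : Step) (W : List Step) (i : ℕ) :
    mcount (x :: W) (i + 1) = (if x.2 ≠ 1 then 1 else 0) + mcount W i := by
  unfold mcount
  rw [List.length_cons, List.range_succ_eq_map, List.filter_cons, filter_succ_range]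
  have h1 : ((List.range W.length).filter
      (fun k => decide (k + 1 < i + 1 ∧ ((x :: W).getD (k + 1) (0,0)).2 ≠ 1))) =
      (List.range W.length).filter (fun k => decide (k < i ∧ (W.getD k (0,0)).2 ≠ 1)) := by
    apply List.filter_congr
    intro k _
    simp [List.getD_cons_succ, Nat.succ_lt_succ_iff]
  rw [h1]
  simp only [List.getD_cons_zero]
  by_cases h : x.2 = 1
  · have : decide (0 < i + 1 ∧ x.2 ≠ 1) = false := by simp [h]
    simp only [this]
    simp [h]
  · have : decide (0 < i + 1 ∧ x.2 ≠ 1) = true := by simp [h]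
    simp only [this]
    simp [h]
    omega

lemma mcount_zero (W : List Step) : mcount W 0 = 0 := by
  unfold mcount; simp

lemma getD_concat_lenB (W : List Step) (y : Step) :
    (W ++ [y]).getD W.length (0,0) = y := by
  rw [List.getD_eq_getElem?_getD, List.getElem?_concat_length]
  rfl

lemma mcount_append_single (W : List Step) (y : Step) {i : ℕ} (h : i ≤ W.length) :
    mcount (W ++ [y]) i = mcount W i := by
  unfold mcount
  rw [List.length_append, List.length_singleton, List.range_succ, List.filter_append]
  rw [filter_single _ _ (by simp; omega), List.append_nil]
  congr 1
  apply List.filter_congr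
  intro k hk
  simp only [List.mem_range] at hk
  rw [List.getD_append _ _ _ _ hk]

lemma dcount_cons_succ (x : Step) (W : List Step) (i : ℕ) :
    dcount (x :: W) (i + 1) = dcount W i := by
  unfold dcount
  rw [List.length_cons, List.range_succ_eq_map, List.filter_cons, filter_succ_range]
  have h1 : ((List.range W.length).filter
      (fun k => decide (i + 1 < k + 1 ∧ (x :: W).getD (k + 1) (0,0) = ((2:Fin 3),1)))) =
      (List.range W.length).filter (fun k => decide (i < k ∧ W.getD k (0,0) = ((2:Fin 3),1))) := by
    apply List.filter_congr
    intro k _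
    simp [List.getD_cons_succ, Nat.succ_lt_succ_iff]
  rw [h1]
  have : decide (i + 1 < 0 ∧ ((x :: W).getD 0 (0,0)) = ((2:Fin 3),1)) = false := by
    simp
  rw [this]
  simp

lemma dcount_append_single (W : List Step) (y : Step) (i : ℕ) :
    dcount (W ++ [y]) i = dcount W i + (if y = D1 ∧ i < W.length then 1 else 0) := by
  unfold dcount
  rw [List.length_append, List.length_singleton, List.range_succ, List.filter_append,
    List.length_append]
  congr 1
  · congr 1
    apply List.filter_congr
    intro k hk
    simp only [List.mem_range] at hk
    rw [List.getD_append _ _ _ _ hk]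
  · by_cases hcase : y = D1 ∧ i < W.length
    · rw [filter_single' _ _ (by
        simp only [decide_eq_true_eq]
        refine ⟨hcase.2, ?_⟩
        rw [getD_concat_lenB]
        exact hcase.1)]
      simp [hcase]
    · rw [filter_single _ _ (by
        simp only [decide_eq_false_iff_not]
        intro hc
        rw [getD_concat_lenB] at hc
        exact hcase ⟨hc.2, hc.1⟩)]
      simp [hcase]

lemma dcount_ge_len (W : List Step) {i : ℕ} (h : W.length ≤ i + 1) : dcount W i = 0 := by
  unfold dcount
  rw [List.length_eq_zero_iff]
  apply List.filter_eq_nil_iff.2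
  intro k hk
  simp only [List.mem_range] at hk
  simp only [decide_eq_true_eq]
  intro hc
  omega


-- helper getD lemmas, generic
lemma getD_concat_len' {α} (l : List α) (a : α) (d : α) : (l ++ [a]).getD l.length d = a := by
  rw [List.getD_eq_getElem?_getD, List.getElem?_concat_length]; rfl

lemma getD_append_lt {α} (l l' : List α) (d : α) {i : ℕ} (h : i < l.length) :
    (l ++ l').getD i d = l.getD i d := List.getD_append _ _ _ _ h

lemma getD_map_succ (I : List ℕ) {j : ℕ} (h : j < I.length) :
    (I.map (· + 1)).getD j 0 = I.getD j 0 + 1 := by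
  rw [List.getD_eq_getElem _ _ (by simpa using h), List.getD_eq_getElem _ _ h, List.getElem_map]

lemma wdIdx_getD_lt (W : List Step) {j : ℕ} (h : j < (wdIdx W).length) :
    (wdIdx W).getD j 0 < W.length := by
  rw [List.getD_eq_getElem _ _ h]
  have hm := List.getElem_mem (l := wdIdx W) (by exact h)
  have h2 : (wdIdx W)[j] ∈ List.range W.length := by
    unfold wdIdx at hm ⊢
    exact (List.mem_filter.1 hm).1
  simpa using h2
lemma countP_mid (p : Step → Bool) (x y : Step) (W : List Step) :
    List.countP p (x :: (W ++ [y])) =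
      List.countP p W + ((if p x then 1 else 0) + (if p y then 1 else 0)) := by
  simp [List.countP_cons, List.countP_append]
  by_cases h1 : p x <;> by_cases h2 : p y <;> simp [h1, h2] <;> omega

lemma wdIdx_mid (x y : Step) (W : List Step) (hx : x ≠ D1) (hy : y ≠ D1) :
    wdIdx (x :: (W ++ [y])) = 0 :: ((wdIdx W).map (· + 1) ++ [W.length + 1]) := by
  have h1 := wdIdx_cons x (W ++ [y])
  rw [wdIdx_append_single, if_neg hy, if_neg hx] at h1
  rw [h1, List.map_append]
  simp

section Master

variable (n a : ℕ) (x y : Step) (W : List Step)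

lemma mid_iff (hx : x ≠ D1) (hy : y ≠ D1)
    (hx1 : 1 ≤ x.2) (hy1 : 1 ≤ y.2)
    (hx2 : x.1 ≠ 2 → x.2 = 1) (hy2 : y.1 ≠ 2 → y.2 = 1)
    (hp1 : x.1 = 0 ↔ y.1 = 1) (hp2 : y.1 = 0 ↔ x.1 = 1)
    (hc1 : ((if x.1 = 0 ∨ x.1 = 2 then 1 else 0) + (if y.1 = 0 ∨ y.1 = 2 then 1 else 0) : ℕ) = a)
    (hc2 : ((if x.1 = 1 ∨ x.1 = 2 then 1 else 0) + (if y.1 = 1 ∨ y.1 = 2 then 1 else 0) : ℕ) = a)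
    (ha : a = 1 + (if x.2 = 1 then 0 else 1)) :
    IsWeightedDelannoy (n + a) (x :: (W ++ [y])) ↔
      (IsWeightedDelannoy n W ∧
        (x.2 ≠ 1 → y.1 = 2 ∧ (y.2 : ℤ) = 2 * (n : ℤ) + 2 * a + 1 - x.2)) := by
  have hJ : wdIdx (x :: (W ++ [y])) = 0 :: ((wdIdx W).map (· + 1) ++ [W.length + 1]) := wdIdx_mid x y W hx hy
  have hlen : (wdIdx (x :: (W ++ [y]))).length = (wdIdx W).length + 2 := by rw [hJ]; simp
  have hJ0 : (wdIdx (x :: (W ++ [y]))).getD 0 0 = 0 := by rw [hJ]; rfl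
  have hJmid : ∀ j, j < (wdIdx W).length → (wdIdx (x :: (W ++ [y]))).getD (j + 1) 0 = (wdIdx W).getD j 0 + 1 := by
    intro j hj
    rw [hJ, List.getD_cons_succ, getD_append_lt _ _ _ (by simpa using hj), getD_map_succ _ hj]
  have hJlast : (wdIdx (x :: (W ++ [y]))).getD ((wdIdx W).length + 1) 0 = W.length + 1 := by
    rw [hJ, List.getD_cons_succ]
    have e : (wdIdx W).length = ((wdIdx W).map (· + 1)).length := by simp
    rw [show ((wdIdx W).map (· + 1) ++ [W.length + 1]) = ((wdIdx W).map (· + 1) ++ [W.length + 1]) from rfl,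
      e, getD_concat_len']
  have hV0 : (x :: (W ++ [y])).getD 0 (0,0) = x := rfl
  have hVmid : ∀ i, i < W.length → (x :: (W ++ [y])).getD (i + 1) (0,0) = W.getD i (0,0) := by
    intro i h
    rw [List.getD_cons_succ, getD_append_lt _ _ _ h]
  have hVlast : (x :: (W ++ [y])).getD (W.length + 1) (0,0) = y := by
    rw [List.getD_cons_succ, getD_concat_len']
  have hVlen : (x :: (W ++ [y])).length = W.length + 2 := by simp
  have hm0 : mcount (x :: (W ++ [y])) 0 = 0 := mcount_zero _
  have hmmid : ∀ i, i ≤ W.length →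
      mcount (x :: (W ++ [y])) (i + 1) = (if x.2 ≠ 1 then 1 else 0) + mcount W i := by
    intro i h
    rw [mcount_cons_succ, mcount_append_single _ _ h]
  have hdmid : ∀ i, dcount (x :: (W ++ [y])) (i + 1) = dcount W i := by
    intro i
    rw [dcount_cons_succ, dcount_append_single, if_neg (fun h => hy h.1), Nat.add_zero]
  have hdlast : dcount (x :: (W ++ [y])) (W.length + 1) = 0 := dcount_ge_len _ (by omega)
  have hIb : ∀ j, j < (wdIdx W).length → (wdIdx W).getD j 0 < W.length := fun j hj => wdIdx_getD_lt W hj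
  set mx : ℕ := if x.2 = 1 then 0 else 1 with hmx
  simp only [IsWeightedDelannoy]
  constructor
  · rintro ⟨h1, h2, h3, h4, h5, h6, h7⟩
    rw [hlen] at h4
    have ht4 : Even (wdIdx W).length := by
      rcases h4 with ⟨r, hr⟩
      exact ⟨r - 1, by omega⟩
    refine ⟨⟨?_, ?_, ?_, ht4, ?_, ?_, ?_⟩, ?_⟩
    · intro w hw
      exact h1 w (by simp; tauto)
    · rw [countP_mid] at h2
      simp only [decide_eq_true_eq] at h2
      omega
    · rw [countP_mid] at h3
      simp only [decide_eq_true_eq] at h3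
      omega
    · -- condition 5 on W
      intro j hj hjd hguard
      have H := h5 (j + 1) (by omega) (by rw [hVmid j hj]; exact hjd) (by rw [hlen]; omega)
      rw [hlen] at H
      obtain ⟨r, hr⟩ := ht4
      have e1 : ((wdIdx W).length + 2) / 2 - 1 = ((wdIdx W).length / 2 - 1) + 1 := by omega
      rw [e1, hJmid _ (by omega)] at H
      omega
    · -- condition 6 on W
      intro j hj
      have H := h6 (j + 1) (by omega)
      rw [hlen] at H
      have e1 : (wdIdx W).length + 2 - 1 - (j + 1) = ((wdIdx W).length - 1 - j) + 1 := by omega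
      rw [e1, hJmid j hj, hJmid ((wdIdx W).length - 1 - j) (by omega),
        hVmid _ (hIb j hj), hVmid _ (hIb ((wdIdx W).length - 1 - j) (by omega))] at H
      exact H
    · -- condition 7 on W
      intro j hj hw
      have H := h7 (j + 1) (by rw [hlen]; omega) (by
        rw [hJmid j (by omega), hVmid _ (hIb j (by omega))]; exact hw)
      rw [hlen] at H
      have e1 : (wdIdx W).length + 2 - 1 - (j + 1) = ((wdIdx W).length - 1 - j) + 1 := by omega
      have hjt : j < (wdIdx W).length := by omega
      have hj2 : (wdIdx W).length - 1 - j < (wdIdx W).length := by omega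
      rw [e1, hJmid j hjt, hJmid ((wdIdx W).length - 1 - j) hj2,
        hVmid _ (hIb j hjt), hVmid _ (hIb ((wdIdx W).length - 1 - j) hj2),
        hmmid _ (le_of_lt (hIb j hjt)), hdmid] at H
      refine ⟨H.1, ?_⟩
      have H2 := H.2
      have hmx2 : (if x.2 ≠ 1 then 1 else 0) = mx := by
        by_cases hc : x.2 = 1 <;> simp [hmx, hc]
      rw [hmx2] at H2
      push_cast at H2 ⊢
      omega
    · -- heavy output
      intro hw
      have H := h7 0 (by rw [hlen]; omega) (by rw [hJ0, hV0]; exact hw)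
      rw [hlen] at H
      have e1 : (wdIdx W).length + 2 - 1 - 0 = (wdIdx W).length + 1 := by omega
      rw [e1, hJ0, hJlast, hV0, hVlast, hm0, hdlast] at H
      refine ⟨H.1, ?_⟩
      have H2 := H.2
      push_cast at H2 ⊢
      omega
  · rintro ⟨⟨h1, h2, h3, h4, h5, h6, h7⟩, hh⟩
    have ht2 : Even (wdIdx W).length → (wdIdx W).length ≠ 0 → 2 ≤ (wdIdx W).length := by
      intro he hne
      rcases he with ⟨r, hr⟩
      omega
    refine ⟨?_, ?_, ?_, ?_, ?_, ?_, ?_⟩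
    · intro w hw
      simp only [List.mem_cons, List.mem_append, List.mem_singleton, List.not_mem_nil,
        or_false] at hw
      rcases hw with rfl | hw | rfl
      · exact ⟨hx1, hx2⟩
      · exact h1 w hw
      · exact ⟨hy1, hy2⟩
    · rw [countP_mid]
      simp only [decide_eq_true_eq]
      omega
    · rw [countP_mid]
      simp only [decide_eq_true_eq]
      omega
    · rw [hlen]
      rcases h4 with ⟨r, hr⟩
      exact ⟨r + 1, by omega⟩
    · -- condition 5 on V
      intro i hi hid _
      rw [hlen]
      rw [hVlen] at hi
      have e2 : ((wdIdx W).length + 2) / 2 - 1 = (wdIdx W).length / 2 := by omega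
      rw [e2]
      -- i cannot be 0 or W.length+1
      have hi0 : i ≠ 0 := by
        intro h0
        rw [h0, hV0] at hid
        exact hx (by rw [hid]; rfl)
      have hiL : i ≠ W.length + 1 := by
        intro h0
        rw [h0, hVlast] at hid
        exact hy (by rw [hid]; rfl)
      obtain ⟨j, rfl⟩ : ∃ j, i = j + 1 := ⟨i - 1, by omega⟩
      have hjW : j < W.length := by omega
      by_cases ht0 : (wdIdx W).length = 0
      · have e0 : (wdIdx W).length / 2 = 0 := by omega
        rw [e0, hJ0]
        omega
      · have htge : 2 ≤ (wdIdx W).length := ht2 h4 ht0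
        have e3 : (wdIdx W).length / 2 = ((wdIdx W).length / 2 - 1) + 1 := by omega
        rw [e3, hJmid _ (by omega)]
        have H := h5 j hjW (by rw [← hVmid j hjW]; exact hid) (by omega)
        omega
    · -- condition 6 on V
      intro j hj
      rw [hlen] at hj ⊢
      rcases Nat.eq_zero_or_pos j with rfl | hjpos
      · have e1 : (wdIdx W).length + 2 - 1 - 0 = (wdIdx W).length + 1 := by omega
        rw [e1, hJ0, hJlast, hV0, hVlast]
        exact hp1
      · obtain ⟨j', rfl⟩ : ∃ j', j = j' + 1 := ⟨j - 1, by omega⟩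
        by_cases hjt : j' = (wdIdx W).length
        · rw [hjt]
          have e1 : (wdIdx W).length + 2 - 1 - ((wdIdx W).length + 1) = 0 := by omega
          rw [e1, hJ0, hJlast, hV0, hVlast]
          exact hp2
        · have hj' : j' < (wdIdx W).length := by omega
          have e1 : (wdIdx W).length + 2 - 1 - (j' + 1) = ((wdIdx W).length - 1 - j') + 1 := by omega
          rw [e1, hJmid j' hj', hJmid ((wdIdx W).length - 1 - j') (by omega),
            hVmid _ (hIb j' hj'), hVmid _ (hIb ((wdIdx W).length - 1 - j') (by omega))]
          exact h6 j' hj'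
    · -- condition 7 on V
      intro j hj hw
      rw [hlen] at hj ⊢
      rcases Nat.eq_zero_or_pos j with rfl | hjpos
      · rw [hJ0, hV0] at hw
        have e1 : (wdIdx W).length + 2 - 1 - 0 = (wdIdx W).length + 1 := by omega
        rw [e1, hJ0, hJlast, hV0, hVlast, hm0, hdlast]
        obtain ⟨hy2', hyeq⟩ := hh hw
        refine ⟨hy2', ?_⟩
        push_cast
        push_cast at hyeq
        omega
      · obtain ⟨j', rfl⟩ : ∃ j', j = j' + 1 := ⟨j - 1, by omega⟩
        have hj' : j' < (wdIdx W).length / 2 := by omega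
        have hjt : j' < (wdIdx W).length := by omega
        have hj2 : (wdIdx W).length - 1 - j' < (wdIdx W).length := by omega
        rw [hJmid j' hjt, hVmid _ (hIb j' hjt)] at hw
        have H := h7 j' hj' hw
        have e1 : (wdIdx W).length + 2 - 1 - (j' + 1) = ((wdIdx W).length - 1 - j') + 1 := by omega
        rw [e1, hJmid j' hjt, hJmid ((wdIdx W).length - 1 - j') hj2,
          hVmid _ (hIb j' hjt), hVmid _ (hIb ((wdIdx W).length - 1 - j') hj2),
          hmmid _ (le_of_lt (hIb j' hjt)), hdmid]
        refine ⟨H.1, ?_⟩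
        have H2 := H.2
        have hmx2 : (if x.2 ≠ 1 then 1 else 0) = mx := by
          by_cases hc : x.2 = 1 <;> simp [hmx, hc]
        rw [hmx2]
        push_cast at H2 ⊢
        omega

end Master

lemma d1_props : (1:ℕ) ≤ D1.2 ∧ (D1.1 ≠ 2 → D1.2 = 1) := by
  refine ⟨le_refl 1, fun _ => rfl⟩

lemma countP_app1 (p : Step → Bool) (W : List Step) (y : Step) :
    List.countP p (W ++ [y]) = List.countP p W + (if p y then 1 else 0) := by
  by_cases h : p y <;> simp [List.countP_append, List.countP_cons, h]

lemma append_d1_iff (n : ℕ) (W : List Step) :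
    IsWeightedDelannoy (n + 1) (W ++ [D1]) ↔ IsWeightedDelannoy n W := by
  have hJ : wdIdx (W ++ [D1]) = wdIdx W := by
    rw [wdIdx_append_single, if_pos rfl, List.append_nil]
  have hVmid : ∀ i, i < W.length → (W ++ [D1]).getD i (0,0) = W.getD i (0,0) := by
    intro i h
    rw [getD_append_lt _ _ _ h]
  have hVlast : (W ++ [D1]).getD W.length (0,0) = D1 := getD_concat_len' _ _ _
  have hVlen : (W ++ [D1]).length = W.length + 1 := by simp
  have hmm : ∀ i, i ≤ W.length → mcount (W ++ [D1]) i = mcount W i := by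
    intro i h
    rw [mcount_append_single _ _ h]
  have hdd : ∀ i, i < W.length → dcount (W ++ [D1]) i = dcount W i + 1 := by
    intro i h
    rw [dcount_append_single, if_pos ⟨rfl, h⟩]
  have hIb : ∀ j, j < (wdIdx W).length → (wdIdx W).getD j 0 < W.length :=
    fun j hj => wdIdx_getD_lt W hj
  simp only [IsWeightedDelannoy, hJ]
  constructor
  · rintro ⟨h1, h2, h3, h4, h5, h6, h7⟩
    refine ⟨?_, ?_, ?_, h4, ?_, ?_, ?_⟩
    · intro w hw
      exact h1 w (by simp; tauto)
    · rw [countP_app1, if_pos (by decide)] at h2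
      omega
    · rw [countP_app1, if_pos (by decide)] at h3
      omega
    · intro i hi hid hguard
      exact h5 i (by omega) (by rw [hVmid i hi]; exact hid) hguard
    · intro j hj
      have H := h6 j hj
      rw [hVmid _ (hIb j hj), hVmid _ (hIb _ (by omega))] at H
      exact H
    · intro j hj hw
      have hjt : j < (wdIdx W).length := by omega
      have hj2 : (wdIdx W).length - 1 - j < (wdIdx W).length := by omega
      have H := h7 j hj (by rw [hVmid _ (hIb j hjt)]; exact hw)
      rw [hVmid _ (hIb j hjt), hVmid _ (hIb _ hj2),
        hmm _ (le_of_lt (hIb j hjt)), hdd _ (hIb _ hj2)] at H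
      refine ⟨H.1, ?_⟩
      have H2 := H.2
      push_cast at H2 ⊢
      omega
  · rintro ⟨h1, h2, h3, h4, h5, h6, h7⟩
    refine ⟨?_, ?_, ?_, h4, ?_, ?_, ?_⟩
    · intro w hw
      simp only [List.mem_append, List.mem_singleton] at hw
      rcases hw with hw | rfl
      · exact h1 w hw
      · exact d1_props
    · rw [countP_app1, if_pos (by decide)]
      omega
    · rw [countP_app1, if_pos (by decide)]
      omega
    · intro i hi hid hguard
      rw [hVlen] at hi
      by_cases hiW : i < W.length
      · exact h5 i hiW (by rw [← hVmid i hiW]; exact hid) hguard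
      · have : i = W.length := by omega
        subst this
        exact hIb _ (by omega)
    · intro j hj
      have H := h6 j hj
      rw [← hVmid _ (hIb j hj), ← hVmid _ (hIb _ (by omega))] at H
      exact H
    · intro j hj hw
      have hjt : j < (wdIdx W).length := by omega
      have hj2 : (wdIdx W).length - 1 - j < (wdIdx W).length := by omega
      rw [hVmid _ (hIb j hjt)] at hw
      have H := h7 j hj hw
      rw [← hVmid _ (hIb j hjt), ← hVmid _ (hIb _ hj2)] at H
      rw [hmm _ (le_of_lt (hIb j hjt)), hdd _ (hIb _ hj2)]
      refine ⟨H.1, ?_⟩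
      have H2 := H.2
      push_cast at H2 ⊢
      omega

lemma ne_iff (n : ℕ) (W : List Step) :
    IsWeightedDelannoy (n + 1) (((0,1) : Step) :: (W ++ [((1,1) : Step)])) ↔
      IsWeightedDelannoy n W := by
  rw [mid_iff n 1 (0,1) (1,1) W (by decide) (by decide) (by decide) (by decide)
    (by decide) (by decide) (by decide) (by decide) (by decide) (by decide) (by decide)]
  simp

lemma en_iff (n : ℕ) (W : List Step) :
    IsWeightedDelannoy (n + 1) (((1,1) : Step) :: (W ++ [((0,1) : Step)])) ↔
      IsWeightedDelannoy n W := by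
  rw [mid_iff n 1 (1,1) (0,1) W (by decide) (by decide) (by decide) (by decide)
    (by decide) (by decide) (by decide) (by decide) (by decide) (by decide) (by decide)]
  simp

lemma dd_iff (n l w : ℕ) (W : List Step) (hl : 2 ≤ l) (hw : 2 ≤ w) :
    IsWeightedDelannoy (n + 2) (((2,l) : Step) :: (W ++ [((2,w) : Step)])) ↔
      (IsWeightedDelannoy n W ∧ l + w = 2 * n + 5) := by
  rw [mid_iff n 2 (2,l) (2,w) W
    (by simp [D1, Prod.ext_iff]; omega) (by simp [D1, Prod.ext_iff]; omega)
    (by simp; omega) (by simp; omega)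
    (fun h => absurd rfl h) (fun h => absurd rfl h)
    (by simp) (by simp) (by simp) (by simp)
    (by rw [if_neg (by omega)])]
  constructor
  · rintro ⟨hD, hrest⟩
    have H := (hrest (by simp; omega)).2
    refine ⟨hD, ?_⟩
    push_cast at H
    omega
  · rintro ⟨hD, hlw⟩
    exact ⟨hD, fun _ => ⟨rfl, by push_cast; omega⟩⟩

lemma fin3_cases (a : Fin 3) : a = 0 ∨ a = 1 ∨ a = 2 := by
  revert a; decide

lemma wdIdx_len_le (W : List Step) : (wdIdx W).length ≤ W.length := by
  unfold wdIdx
  calc ((List.range W.length).filter _).length ≤ (List.range W.length).length :=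
        List.length_filter_le _ _
    _ = W.length := List.length_range

lemma del_classify {n : ℕ} {V : List Step} (h : IsWeightedDelannoy n V) (hne : V ≠ []) :
    (∃ W, V = W ++ [D1]) ∨
    (∃ W, V = ((0,1) : Step) :: (W ++ [((1,1) : Step)])) ∨
    (∃ W, V = ((1,1) : Step) :: (W ++ [((0,1) : Step)])) ∨
    (∃ W l w, 2 ≤ l ∧ 2 ≤ w ∧ V = ((2,l) : Step) :: (W ++ [((2,w) : Step)])) := by
  obtain ⟨h1, h2, h3, h4, h5, h6, h7⟩ := h
  set y := V.getLast hne with hy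
  have hVdec : V = V.dropLast ++ [y] := (List.dropLast_append_getLast hne).symm
  by_cases hyD : y = D1
  · exact Or.inl ⟨V.dropLast, by rw [← hyD]; exact hVdec⟩
  · -- t ≥ 1
    have hJU : wdIdx V = wdIdx V.dropLast ++ [V.dropLast.length] := by
      conv_lhs => rw [hVdec]
      rw [wdIdx_append_single, if_neg hyD]
    have ht1 : 1 ≤ (wdIdx V).length := by rw [hJU]; simp
    have ht2 : 2 ≤ (wdIdx V).length := by
      rcases h4 with ⟨r, hr⟩
      omega
    have hlenV2 : 2 ≤ V.length := le_trans ht2 (wdIdx_len_le V)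
    -- head is not D1
    have hv0D : V.getD 0 (0,0) ≠ D1 := by
      intro hc
      have := h5 0 (by omega) hc (by omega)
      omega
    -- decompose V = v0 :: (M ++ [y])
    obtain ⟨v0, M, hVform⟩ : ∃ v0 M, V = v0 :: (M ++ [y]) := by
      obtain ⟨v0, U', hU⟩ : ∃ v0 U', V.dropLast = v0 :: U' := by
        cases hU : V.dropLast with
        | nil =>
            rw [hU] at hVdec
            rw [hVdec] at hlenV2
            simp at hlenV2
        | cons a l => exact ⟨a, l, rfl⟩
      exact ⟨v0, U', by rw [hVdec, hU, List.cons_append]⟩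
    have hv0 : v0 ≠ D1 := by
      rw [hVform] at hv0D
      exact hv0D
    -- wdIdx structure
    have hJ : wdIdx V = 0 :: ((wdIdx M).map (· + 1) ++ [M.length + 1]) := by
      rw [hVform]; exact wdIdx_mid v0 y M hv0 hyD
    have hlen : (wdIdx V).length = (wdIdx M).length + 2 := by rw [hJ]; simp
    have hJ0 : (wdIdx V).getD 0 0 = 0 := by rw [hJ]; rfl
    have hJlast : (wdIdx V).getD ((wdIdx M).length + 1) 0 = M.length + 1 := by
      rw [hJ, List.getD_cons_succ]
      have e : (wdIdx M).length = ((wdIdx M).map (· + 1)).length := by simp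
      rw [e, getD_concat_len']
    have hV0 : V.getD 0 (0,0) = v0 := by rw [hVform]; rfl
    have hVlast : V.getD (M.length + 1) (0,0) = y := by
      rw [hVform, List.getD_cons_succ, getD_concat_len']
    -- pairing at the ends
    have hiff1 : (v0.1 = 0 ↔ y.1 = 1) := by
      have H := h6 0 (by omega)
      rw [hlen] at H
      rw [show (wdIdx M).length + 2 - 1 - 0 = (wdIdx M).length + 1 by omega] at H
      rw [hJ0, hJlast, hV0, hVlast] at H
      exact H
    have hiff2 : (y.1 = 0 ↔ v0.1 = 1) := by
      have H := h6 ((wdIdx M).length + 1) (by omega)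
      rw [hlen] at H
      rw [show (wdIdx M).length + 2 - 1 - ((wdIdx M).length + 1) = 0 by omega] at H
      rw [hJ0, hJlast, hV0, hVlast] at H
      exact H
    have hv0mem : v0 ∈ V := by rw [hVform]; exact List.mem_cons_self
    have hymem : y ∈ V := by
      rw [hVdec]; exact List.mem_append_right _ (List.mem_singleton_self _)
    have hv0w := h1 v0 hv0mem
    have hyw := h1 y hymem
    obtain ⟨a1, a2⟩ := v0
    obtain ⟨b1, b2⟩ := y
    simp only at hiff1 hiff2 hv0w hyw
    rcases fin3_cases a1 with rfl | rfl | rfl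
    · -- N start
      have hb1 : b1 = 1 := hiff1.mp rfl
      have ha2 : a2 = 1 := hv0w.2 (by decide)
      have hb2 : b2 = 1 := hyw.2 (by rw [hb1]; decide)
      refine Or.inr (Or.inl ⟨M, ?_⟩)
      rw [hVform, ha2, hb1, hb2]
    · -- E start
      have hb1 : b1 = 0 := hiff2.mpr rfl
      have ha2 : a2 = 1 := hv0w.2 (by decide)
      have hb2 : b2 = 1 := hyw.2 (by rw [hb1]; decide)
      refine Or.inr (Or.inr (Or.inl ⟨M, ?_⟩))
      rw [hVform, ha2, hb1, hb2]
    · -- D start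
      have hb1 : b1 = 2 := by
        rcases fin3_cases b1 with h | h | h
        · exact absurd (hiff2.mp h) (by decide)
        · exact absurd (hiff1.mpr h) (by decide)
        · exact h
      have ha2 : 2 ≤ a2 := by
        have hne1 : a2 ≠ 1 := by
          intro hc
          exact hv0 (by rw [hc]; rfl)
        omega
      have hb2 : 2 ≤ b2 := by
        have hne1 : b2 ≠ 1 := by
          intro hc
          apply hyD
          rw [hc, hb1]
          rfl
        have := hyw.1
        omega
      refine Or.inr (Or.inr (Or.inr ⟨M, a2, b2, ha2, hb2, ?_⟩))
      rw [hVform, hb1]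

lemma del_nil : IsWeightedDelannoy 0 ([] : List Step) := by
  refine ⟨by simp, by simp, by simp, ?_, by simp, ?_, ?_⟩
  · show Even (wdIdx []).length
    unfold wdIdx
    simp
  · intro j hj
    unfold wdIdx at hj
    simp at hj
  · intro j hj
    unfold wdIdx at hj
    simp at hj

lemma del_zero_eq_nil {W : List Step} (h : IsWeightedDelannoy 0 W) : W = [] := by
  obtain ⟨h1, h2, h3, -⟩ := h
  cases W with
  | nil => rfl
  | cons a l =>
      exfalso
      have A := List.countP_eq_zero.mp h2 a List.mem_cons_self
      have B := List.countP_eq_zero.mp h3 a List.mem_cons_self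
      simp only [decide_eq_true_eq] at A B
      rcases fin3_cases a.1 with ha | ha | ha
      · exact A (Or.inl ha)
      · exact B (Or.inl ha)
      · exact A (Or.inr ha)

lemma del_ne_nil {n : ℕ} {V : List Step} (h : IsWeightedDelannoy n V) (hn : n ≠ 0) :
    V ≠ [] := by
  intro hc
  subst hc
  have := h.2.1
  simp at this
  omega

abbrev DelSub (n : ℕ) := {W : List Step // IsWeightedDelannoy n W}

abbrev SumT (n : ℕ) := DelSub n ⊕ DelSub n ⊕ DelSub n ⊕ (Fin (2 * n) × DelSub (n - 1))

def toNext (n : ℕ) : SumT n → DelSub (n + 1)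
  | .inl ⟨W, h⟩ => ⟨W ++ [D1], (append_d1_iff n W).mpr h⟩
  | .inr (.inl ⟨W, h⟩) => ⟨(0,1) :: (W ++ [(1,1)]), (ne_iff n W).mpr h⟩
  | .inr (.inr (.inl ⟨W, h⟩)) => ⟨(1,1) :: (W ++ [(0,1)]), (en_iff n W).mpr h⟩
  | .inr (.inr (.inr (i, ⟨W, h⟩))) => ⟨(2, i.1 + 2) :: (W ++ [(2, 2*n + 1 - i.1)]), by
      have hi := i.2
      rw [show n + 1 = (n - 1) + 2 by omega]
      exact (dd_iff (n-1) _ _ W (by omega) (by omega)).mpr ⟨h, by omega⟩⟩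

lemma getLast?_mid (x y : Step) (W : List Step) :
    (x :: (W ++ [y])).getLast? = some y := by
  rw [← List.cons_append, List.getLast?_concat]

lemma toNext_inj (n : ℕ) : Function.Injective (toNext n) := by
  rintro (⟨W,h⟩ | ⟨W,h⟩ | ⟨W,h⟩ | ⟨i, W, h⟩) (⟨W',h'⟩ | ⟨W',h'⟩ | ⟨W',h'⟩ | ⟨i', W', h'⟩) heq <;>
    simp only [toNext, Subtype.mk.injEq] at heq
  -- 1,1
  · have := congrArg List.dropLast heq
    simp only [List.dropLast_concat] at this
    subst this
    rfl
  -- 1,2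
  · exfalso
    have h1 := congrArg List.getLast? heq
    rw [List.getLast?_concat, getLast?_mid] at h1
    exact absurd (Option.some.inj h1) (by decide)
  -- 1,3
  · exfalso
    have h1 := congrArg List.getLast? heq
    rw [List.getLast?_concat, getLast?_mid] at h1
    exact absurd (Option.some.inj h1) (by decide)
  -- 1,4
  · exfalso
    have h1 := congrArg List.getLast? heq
    rw [List.getLast?_concat, getLast?_mid] at h1
    have h2 := Option.some.inj h1
    have h3 : (1 : ℕ) = 2*n + 1 - i'.1 := congrArg Prod.snd h2
    have := i'.2
    omega
  -- 2,1
  · exfalso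
    have h1 := congrArg List.getLast? heq
    rw [List.getLast?_concat, getLast?_mid] at h1
    exact absurd (Option.some.inj h1) (by decide)
  -- 2,2
  · rw [List.cons.injEq] at heq
    have := congrArg List.dropLast heq.2
    simp only [List.dropLast_concat] at this
    subst this
    rfl
  -- 2,3
  · exfalso
    rw [List.cons.injEq] at heq
    exact absurd heq.1 (by decide)
  -- 2,4
  · exfalso
    rw [List.cons.injEq] at heq
    have := congrArg Prod.fst heq.1
    simp at this
  -- 3,1
  · exfalso
    have h1 := congrArg List.getLast? heq
    rw [List.getLast?_concat, getLast?_mid] at h1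
    exact absurd (Option.some.inj h1) (by decide)
  -- 3,2
  · exfalso
    rw [List.cons.injEq] at heq
    exact absurd heq.1 (by decide)
  -- 3,3
  · rw [List.cons.injEq] at heq
    have := congrArg List.dropLast heq.2
    simp only [List.dropLast_concat] at this
    subst this
    rfl
  -- 3,4
  · exfalso
    rw [List.cons.injEq] at heq
    have := congrArg Prod.fst heq.1
    simp at this
  -- 4,1
  · exfalso
    have h1 := congrArg List.getLast? heq
    rw [getLast?_mid, List.getLast?_concat] at h1
    have h2 := Option.some.inj h1
    have h3 : 2*n + 1 - i.1 = (1 : ℕ) := congrArg Prod.snd h2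
    have := i.2
    omega
  -- 4,2
  · exfalso
    rw [List.cons.injEq] at heq
    have := congrArg Prod.fst heq.1
    simp at this
  -- 4,3
  · exfalso
    rw [List.cons.injEq] at heq
    have := congrArg Prod.fst heq.1
    simp at this
  -- 4,4
  · rw [List.cons.injEq] at heq
    have hi : i = i' := by
      have := congrArg Prod.snd heq.1
      simp only at this
      exact Fin.ext (by omega)
    have hW : W = W' := by
      have := congrArg List.dropLast heq.2
      simpa only [List.dropLast_concat] using this
    subst hi
    subst hW
    rfl

lemma toNext_surj (n : ℕ) : Function.Surjective (toNext n) := by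
  rintro ⟨V, h⟩
  have hne : V ≠ [] := del_ne_nil h (by omega)
  rcases del_classify h hne with ⟨W, rfl⟩ | ⟨W, rfl⟩ | ⟨W, rfl⟩ | ⟨W, l, w, hl, hw, rfl⟩
  · exact ⟨.inl ⟨W, (append_d1_iff n W).mp h⟩, rfl⟩
  · exact ⟨.inr (.inl ⟨W, (ne_iff n W).mp h⟩), rfl⟩
  · exact ⟨.inr (.inr (.inl ⟨W, (en_iff n W).mp h⟩)), rfl⟩
  · have hn1 : 1 ≤ n := by
      have hc := h.2.2.1
      rw [countP_mid] at hc
      simp at hc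
      omega
    have h' := h
    rw [show n + 1 = (n - 1) + 2 by omega] at h'
    obtain ⟨hW, hlw⟩ := (dd_iff (n-1) l w W hl hw).mp h'
    have hil : l - 2 < 2 * n := by omega
    refine ⟨.inr (.inr (.inr (⟨l - 2, hil⟩, ⟨W, hW⟩))), ?_⟩
    simp only [toNext]
    apply Subtype.ext
    simp only
    rw [show l - 2 + 2 = l by omega, show 2*n + 1 - (l - 2) = w by omega]

lemma del_finite : ∀ n : ℕ, Finite (DelSub n) := by
  intro n
  induction n using Nat.strong_induction_on with
  | _ n ih =>
    match n with
    | 0 =>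
        have hs : Subsingleton (DelSub 0) :=
          ⟨fun a b => Subtype.ext (by rw [del_zero_eq_nil a.2, del_zero_eq_nil b.2])⟩
        exact Finite.of_subsingleton
    | Nat.succ m =>
        have f1 : Finite (DelSub m) := ih m (by omega)
        have f2 : Finite (DelSub (m - 1)) := ih (m - 1) (by omega)
        have : Finite (SumT m) := by
          unfold SumT
          rw [show m = m from rfl]
          infer_instance
        exact Finite.of_surjective (toNext m) (toNext_surj m)

lemma eDel_eq (n : ℕ) : eDel n = Nat.card (DelSub n) := rfl

lemma eDel_zero : eDel 0 = 1 := by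
  rw [eDel_eq]
  rw [Nat.card_eq_one_iff_unique]
  exact ⟨⟨fun a b => Subtype.ext (by rw [del_zero_eq_nil a.2, del_zero_eq_nil b.2])⟩,
    ⟨⟨[], del_nil⟩⟩⟩

lemma eDel_succ (n : ℕ) : eDel (n + 1) = 3 * eDel n + 2 * n * eDel (n - 1) := by
  have f1 : Finite (DelSub n) := del_finite n
  have f2 : Finite (DelSub (n - 1)) := del_finite (n - 1)
  have hb : Function.Bijective (toNext n) := ⟨toNext_inj n, toNext_surj n⟩
  have hcard := Nat.card_eq_of_bijective (toNext n) hb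
  rw [eDel_eq, eDel_eq, eDel_eq, ← hcard]
  unfold SumT
  rw [Nat.card_sum, Nat.card_sum, Nat.card_sum, Nat.card_prod]
  rw [Nat.card_eq_fintype_card (α := Fin (2 * n)), Fintype.card_fin]
  ring

theorem stmt10' :
    eDel 0 = 1 ∧ eDel 1 = 3 ∧
    ∀ n : ℕ, 2 ≤ n → eDel n = 3 * eDel (n - 1) + 2 * (n - 1) * eDel (n - 2) := by
  refine ⟨eDel_zero, ?_, ?_⟩
  · have := eDel_succ 0
    rw [eDel_zero] at this
    simpa using this
  · intro n hn
    have h := eDel_succ (n - 1)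
    rw [show n - 1 + 1 = n by omega] at h
    rw [h, show n - 1 - 1 = n - 2 by omega]

/-- `e_0 = 1`, `e_1 = 3`, and `e_n = 3·e_{n−1} + 2(n−1)·e_{n−2}` for `n ≥ 2`. -/
theorem stmt10 :
    eDel 0 = 1 ∧ eDel 1 = 3 ∧
    ∀ n : ℕ, 2 ≤ n → eDel n = 3 * eDel (n - 1) + 2 * (n - 1) * eDel (n - 2) := by
  exact stmt10'
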